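/- Let f be n-times continuously differentiable on [x_k, b]. Define g_0 = f and g_m(x) = (g_{m-1}(x) - g_{m-1}(x_k))/(x - x_k) for x ∈ (x_k, b], with g_m(x_k) := f^{(m)}(x_k)/m!. Then for all m ≤ n-1 and x ∈ (x_k, b], g_m(x) = Σ_{j=m}^{n-1} f^{(j)}(x_k)/j! · (x - x_k)^{j-m} + ∫₀¹ f^{(n)}(x_k + t(x - x_k)) · (x - x_k)^{n-m} (1-t)^{n-1}/(n-1)! dt. -/

import Mathlib

open scoped Nat


noncomputable def divDiff (f : ℝ → ℝ) (xk a b : ℝ) : ℕ → ℝ → ℝ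
  | 0 => f
  | m + 1 => fun x =>
      if x = xk then iteratedDerivWithin (m + 1) f (Set.Icc a b) xk / Nat.factorial (m + 1)
      else (divDiff f xk a b m x - divDiff f xk a b m xk) / (x - xk)

lemma divDiff_self (f : ℝ → ℝ) (xk a b : ℝ) (m : ℕ) :
    divDiff f xk a b m xk = iteratedDerivWithin m f (Set.Icc a b) xk / Nat.factorial m := by
  cases m with
  | zero => simp [divDiff]
  | succ m => simp [divDiff]

theorem divDiff_taylor (f : ℝ → ℝ) (xk b : ℝ) (hxb : xk < b) (n : ℕ) (hn : 1 ≤ n)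
    (hf : ContDiffOn ℝ n f (Set.Icc xk b)) :
    ∀ m ≤ n - 1, ∀ x ∈ Set.Ioc xk b,
      divDiff f xk xk b m x =
        (∑ j ∈ Finset.Icc m (n - 1),
            iteratedDerivWithin j f (Set.Icc xk b) xk / Nat.factorial j *
              (x - xk) ^ (j - m)) +
          ∫ t in (0 : ℝ)..1,
            iteratedDerivWithin n f (Set.Icc xk b) (xk + t * (x - xk)) *
              (x - xk) ^ (n - m) * (1 - t) ^ (n - 1) / Nat.factorial (n - 1) := by
  obtain ⟨k, rfl⟩ : ∃ k, n = k + 1 := ⟨n - 1, (Nat.succ_pred_eq_of_pos hn).symm⟩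
  simp only [Nat.add_sub_cancel]
  set s : Set ℝ := Set.Icc xk b with hsdef
  have hs : UniqueDiffOn ℝ s := uniqueDiffOn_Icc hxb
  have hDcont : ContinuousOn (iteratedDerivWithin (k + 1) f s) s :=
    hf.continuousOn_iteratedDerivWithin le_rfl hs
  intro m
  induction m with
  | zero =>
    intro _ x hx
    have hxk : xk < x := hx.1
    have hxle : x ≤ b := hx.2
    have hxkle : xk ≤ x := le_of_lt hxk
    set g : ℝ → ℝ := fun y => taylorWithinEval f k s y x with hg
    set g' : ℝ → ℝ := fun y =>
      ((k ! : ℝ)⁻¹ * (x - y) ^ k) * iteratedDerivWithin (k + 1) f s y with hg'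
    have hfk : ContDiffOn ℝ k f s := hf.of_le (by exact_mod_cast Nat.le_succ k)
    have hdiffk : DifferentiableOn ℝ (iteratedDerivWithin k f s) s :=
      hf.differentiableOn_iteratedDerivWithin (by exact_mod_cast Nat.lt_succ_self k) hs
    have hgc : ContinuousOn g (Set.Icc xk x) :=
      (continuousOn_taylorWithinEval hs hfk).mono (Set.Icc_subset_Icc_right hxle)
    have hderiv : ∀ y ∈ Set.Ioo xk x, HasDerivWithinAt g (g' y) (Set.Ioi y) y := by
      intro y hy
      have hy' : y ∈ Set.Ioo xk b := ⟨hy.1, lt_of_lt_of_le hy.2 hxle⟩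
      exact (taylorWithinEval_hasDerivAt_Ioo x hxb hy' hfk
        (hdiffk.mono Set.Ioo_subset_Icc_self)).hasDerivWithinAt
    have hg'c : ContinuousOn g' (Set.Icc xk x) := by
      apply ContinuousOn.mul
      · exact (continuousOn_const.mul ((continuousOn_const.sub continuousOn_id).pow _))
      · exact hDcont.mono (Set.Icc_subset_Icc_right hxle)
    have hint : IntervalIntegrable g' MeasureTheory.volume xk x := by
      apply ContinuousOn.intervalIntegrable
      rwa [Set.uIcc_of_le hxkle]
    have hftc : ∫ y in xk..x, g' y = g x - g xk :=
      intervalIntegral.integral_eq_sub_of_hasDeriv_right_of_le hxkle hgc hderiv hint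
    have hgx : g x = f x := taylorWithinEval_self f k s x
    have hgxk : g xk = ∑ j ∈ Finset.range (k + 1),
        ((j ! : ℝ)⁻¹ * (x - xk) ^ j) * iteratedDerivWithin j f s xk := by
      rw [show g xk = taylorWithinEval f k s xk x from rfl, taylor_within_apply]
      simp [smul_eq_mul]
    have hsub : x - xk ≠ 0 := sub_ne_zero.mpr (ne_of_gt hxk)
    have hcov : (x - xk) * ∫ t in (0:ℝ)..1, g' ((x - xk) * t + xk) = ∫ y in xk..x, g' y := by
      rw [intervalIntegral.mul_integral_comp_mul_add]
      norm_num
    have key : (∫ t in (0:ℝ)..1,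
        iteratedDerivWithin (k + 1) f s (xk + t * (x - xk)) * (x - xk) ^ (k + 1 - 0) *
          (1 - t) ^ k / (k ! : ℝ))
        = ∫ y in xk..x, g' y := by
      rw [← hcov, ← intervalIntegral.integral_const_mul]
      apply intervalIntegral.integral_congr
      intro t _
      have h1 : (x - xk) * t + xk = xk + t * (x - xk) := by ring
      have h2 : x - (xk + t * (x - xk)) = (1 - t) * (x - xk) := by ring
      simp only [hg', h1, h2, mul_pow, Nat.sub_zero]
      field_simp
      ring
    show f x = _
    rw [key, hftc, hgx, hgxk]
    have hrange : Finset.Icc 0 k = Finset.range (k + 1) := by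
      ext j; simp [Nat.lt_succ_iff]
    rw [hrange]
    have hterm : ∀ j ∈ Finset.range (k + 1),
        iteratedDerivWithin j f s xk / (j ! : ℝ) * (x - xk) ^ (j - 0)
          = ((j ! : ℝ)⁻¹ * (x - xk) ^ j) * iteratedDerivWithin j f s xk := by
      intro j _
      simp only [Nat.sub_zero, div_eq_mul_inv]
      ring
    rw [Finset.sum_congr rfl hterm]
    ring
  | succ m ih =>
    intro hm x hx
    have hmk : m ≤ k := Nat.le_of_succ_le hm
    have hIH := ih hmk x hx
    have hxne : x ≠ xk := ne_of_gt hx.1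
    have hsub : x - xk ≠ 0 := sub_ne_zero.mpr hxne
    have hself : divDiff f xk xk b m xk = iteratedDerivWithin m f s xk / (m ! : ℝ) :=
      divDiff_self f xk xk b m
    have hunfold : divDiff f xk xk b (m + 1) x =
        (divDiff f xk xk b m x - divDiff f xk xk b m xk) / (x - xk) := by
      simp [divDiff, hxne]
    rw [hunfold, hIH, hself]
    have hmem : m ∈ Finset.Icc m k := Finset.mem_Icc.mpr ⟨le_refl m, hmk⟩
    have herase : Finset.Icc m k \ {m} = Finset.Icc (m + 1) k := by
      rw [Finset.sdiff_singleton_eq_erase, Finset.Icc_erase_left, Finset.Icc_add_one_left_eq_Ioc]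
    have hnum : ((∑ j ∈ Finset.Icc m k,
          iteratedDerivWithin j f s xk / (j ! : ℝ) * (x - xk) ^ (j - m)) +
          (∫ t in (0:ℝ)..1, iteratedDerivWithin (k + 1) f s (xk + t * (x - xk)) *
            (x - xk) ^ (k + 1 - m) * (1 - t) ^ k / (k ! : ℝ)))
          - iteratedDerivWithin m f s xk / (m ! : ℝ)
        = (∑ j ∈ Finset.Icc (m + 1) k,
            iteratedDerivWithin j f s xk / (j ! : ℝ) * (x - xk) ^ (j - m)) +
          ∫ t in (0:ℝ)..1, iteratedDerivWithin (k + 1) f s (xk + t * (x - xk)) *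
            (x - xk) ^ (k + 1 - m) * (1 - t) ^ k / (k ! : ℝ) := by
      rw [Finset.sum_eq_sum_sdiff_singleton_add hmem, herase]
      simp only [Nat.sub_self, pow_zero, mul_one]
      ring
    rw [hnum, add_div, Finset.sum_div, ← intervalIntegral.integral_div]
    congr 1
    · apply Finset.sum_congr rfl
      intro j hj
      have hj1 : m + 1 ≤ j := (Finset.mem_Icc.mp hj).1
      have hjm : j - m = (j - (m + 1)) + 1 := by omega
      rw [hjm, pow_succ, ← mul_assoc, mul_div_assoc, div_self hsub, mul_one]
    · apply intervalIntegral.integral_congr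
      intro t _
      have hkm : k + 1 - m = (k + 1 - (m + 1)) + 1 := by omega
      have h2 : k + 1 - (m + 1) = k - m := by omega
      rw [hkm, pow_succ, h2]
      field_simp
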